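/- The price of stability of every n-player Shapley cost sharing game with submodular cost functions is at most H_n: if every C^r is submodular (C^r(X ∪ {i}) − C^r(X) ≥ C^r(Y ∪ {i}) − C^r(Y) for all X ⊆ Y ⊆ N, i ∈ N \ Y), nonnegative, nondecreasing, and C^r(∅) = 0, then there exists a pure Nash equilibrium P with C(P) ≤ H_n · C(Q) for every strategy vector Q, where H_n = Σ_{l=1}^{n} 1/l. -/

import Mathlib

open Finset

def preSet {N : Type*} [DecidableEq N] (S : Finset N)
    (π : {x // x ∈ S} ≃ Fin S.card) (i : {x // x ∈ S}) : Finset N :=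
  (S.attach.filter (fun j => π j < π i)).image Subtype.val

noncomputable def shapley {N : Type*} [DecidableEq N]
    (C : Finset N → ℝ) (S : Finset N) (i : N) : ℝ :=
  if hi : i ∈ S then
    (1 / (Nat.factorial S.card : ℝ)) *
      ∑ π : {x // x ∈ S} ≃ Fin S.card,
        (C (preSet S π ⟨i, hi⟩ ∪ {i}) - C (preSet S π ⟨i, hi⟩))
  else 0

/-- `users P r = P^r = {i : r ∈ P_i}`, the set of players using resource `r`. -/
def users {n : ℕ} {R : Type*} [DecidableEq R]
    (P : Fin n → Finset R) (r : R) : Finset (Fin n) :=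
  Finset.univ.filter (fun i => r ∈ P i)

/-- The private cost of player `i` under Shapley cost sharing:
`C_i(P) = Σ_{r ∈ P_i} φ_i(C^r, P^r)`. -/
noncomputable def privCost {n : ℕ} {R : Type*} [DecidableEq R]
    (Cr : R → Finset (Fin n) → ℝ) (P : Fin n → Finset R) (i : Fin n) : ℝ :=
  ∑ r ∈ P i, shapley (Cr r) (users P r) i

/-- The social cost `C(P) = Σ_{r ∈ R} C^r(P^r)`. -/
noncomputable def socCost {n : ℕ} {R : Type*} [Fintype R] [DecidableEq R]
    (Cr : R → Finset (Fin n) → ℝ) (P : Fin n → Finset R) : ℝ :=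
  ∑ r : R, Cr r (users P r)

/-- The Shapley potential
`Φ(P) = Σ_{r ∈ R} Σ_{∅ ≠ T ⊆ P^r} ((|P^r|-|T|)!(|T|-1)!/|P^r|!) · C^r(T)`. -/
noncomputable def pot {n : ℕ} {R : Type*} [Fintype R] [DecidableEq R]
    (Cr : R → Finset (Fin n) → ℝ) (P : Fin n → Finset R) : ℝ :=
  ∑ r : R, ∑ T ∈ (users P r).powerset.filter (fun T => T.Nonempty),
    ((Nat.factorial ((users P r).card - T.card) : ℝ) *
        (Nat.factorial (T.card - 1) : ℝ) / (Nat.factorial (users P r).card : ℝ)) *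
      Cr r T

/-- `P` is a pure Nash equilibrium of the Shapley cost sharing game. -/
def isPNE {n : ℕ} {R : Type*} [DecidableEq R]
    (Strat : Fin n → Set (Finset R)) (Cr : R → Finset (Fin n) → ℝ)
    (P : Fin n → Finset R) : Prop :=
  (∀ i, P i ∈ Strat i) ∧
    ∀ i, ∀ Q ∈ Strat i, privCost Cr P i ≤ privCost Cr (Function.update P i Q) i

/-- `H_k`, the `k`-th harmonicNum number. -/
noncomputable def harmonicNum (k : ℕ) : ℝ := ∑ l ∈ Finset.Icc 1 k, (1 / (l : ℝ))

section Aux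
variable {N : Type*} [DecidableEq N]

lemma card_subtype_mem (S A : Finset N) (hA : A ⊆ S) :
    Fintype.card {j : {x // x ∈ S} // j.1 ∈ A} = A.card := by
  rw [Fintype.card_subtype]
  have : (Finset.univ.filter (fun j : {x // x ∈ S} => j.1 ∈ A)) =
      A.attach.map ⟨fun a => (⟨a.1, hA a.2⟩ : {x // x ∈ S}), by
        intro a b h
        exact Subtype.ext (congrArg (fun x : {x // x ∈ S} => x.1) h)⟩ := by
    ext j
    simp only [mem_filter, mem_univ, true_and, Finset.mem_map, Function.Embedding.coeFn_mk]
    constructor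
    · intro h; exact ⟨⟨j.1, h⟩, mem_attach _ _, rfl⟩
    · rintro ⟨a, _, rfl⟩; exact a.2
  rw [this, Finset.card_map, Finset.card_attach]

lemma card_fin_lt (s : ℕ) (c : Fin s) : Fintype.card {k : Fin s // k < c} = (c : ℕ) := by
  rw [Fintype.card_subtype]
  have : (Finset.univ.filter (fun k : Fin s => k < c)) = Finset.Iio c := by
    ext k; simp
  rw [this, Fin.card_Iio]

section fiber
variable {S : Finset N} {i : N} {A : Finset N}

lemma basic_facts (hi : i ∈ S) (hA : A ⊆ S.erase i) : A ⊆ S ∧ i ∉ A ∧ A.card ≤ S.card - 1 ∧ 1 ≤ S.card := by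
  refine ⟨hA.trans (erase_subset _ _), fun h => (mem_erase.mp (hA h)).1 rfl, ?_, one_le_card.mpr ⟨i, hi⟩⟩
  rw [← card_erase_of_mem hi]; exact card_le_card hA

lemma trichotomy (hi : i ∈ S) (hA : A ⊆ S.erase i) (j : {x // x ∈ S}) : j.1 ∈ A ∨ j.1 ∈ S.erase i \ A ∨ j.1 = i := by
  by_cases h1 : j.1 ∈ A
  · exact Or.inl h1
  by_cases h2 : j.1 = i
  · exact Or.inr (Or.inr h2)
  · exact Or.inr (Or.inl (mem_sdiff.mpr ⟨mem_erase.mpr ⟨h2, j.2⟩, h1⟩))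

/-- the position of i in a permutation with prefix set A is A.card -/
lemma pos_eq (hi : i ∈ S) (hA : A ⊆ S.erase i) (π : {x // x ∈ S} ≃ Fin S.card)
    (hπ : ∀ j : {x // x ∈ S}, (π j < π ⟨i, hi⟩ ↔ j.1 ∈ A)) :
    (π ⟨i, hi⟩ : ℕ) = A.card := by
  obtain ⟨hAS, _, _, _⟩ := basic_facts hi hA
  have h1 : Fintype.card {j : {x // x ∈ S} // π j < π ⟨i, hi⟩} = (π ⟨i, hi⟩ : ℕ) := by
    rw [← card_fin_lt S.card (π ⟨i, hi⟩)]
    exact Fintype.card_congr (π.subtypeEquiv (fun j => Iff.rfl))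
  rw [← h1, Fintype.card_congr (Equiv.subtypeEquivRight hπ), card_subtype_mem S A hAS]

noncomputable def buildF (hi : i ∈ S) (hA : A ⊆ S.erase i)
    (σ : {j : {x // x ∈ S} // j.1 ∈ A} ≃ Fin A.card)
    (τ : {j : {x // x ∈ S} // j.1 ∈ S.erase i \ A} ≃ Fin (S.card - 1 - A.card)) :
    {x // x ∈ S} → Fin S.card := fun j =>
  if h : j.1 ∈ A then
    ⟨σ ⟨j, h⟩, by
      obtain ⟨_, _, ha, hs⟩ := basic_facts hi hA
      have := (σ ⟨j, h⟩).2; omega⟩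
  else if h2 : j.1 ∈ S.erase i \ A then
    ⟨A.card + 1 + τ ⟨j, h2⟩, by
      obtain ⟨_, _, ha, hs⟩ := basic_facts hi hA
      have := (τ ⟨j, h2⟩).2; omega⟩
  else
    ⟨A.card, by
      obtain ⟨_, _, ha, hs⟩ := basic_facts hi hA; omega⟩

lemma buildF_inj (hi : i ∈ S) (hA : A ⊆ S.erase i) (σ τ) : Function.Injective (buildF hi hA σ τ) := by
  intro j k h
  have hv : (buildF hi hA σ τ j : ℕ) = (buildF hi hA σ τ k : ℕ) := congrArg Fin.val h
  rcases trichotomy hi hA j with hj | hj | hj <;> rcases trichotomy hi hA k with hk | hk | hk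
  · -- both in A
    simp only [buildF, dif_pos hj, dif_pos hk] at hv
    have : σ ⟨j, hj⟩ = σ ⟨k, hk⟩ := Fin.ext hv
    have := σ.injective this
    exact Subtype.ext (congrArg (Subtype.val ∘ Subtype.val) this)
  · simp only [buildF, dif_pos hj, dif_neg (mem_sdiff.mp hk).2, dif_pos hk] at hv
    have := (σ ⟨j, hj⟩).2; omega
  · have hkA : ¬ k.1 ∈ A := by rw [hk]; exact (basic_facts hi hA).2.1
    have hkB : ¬ k.1 ∈ S.erase i \ A := by rw [hk]; simp
    simp only [buildF, dif_pos hj, dif_neg hkA, dif_neg hkB] at hv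
    have := (σ ⟨j, hj⟩).2; omega
  · simp only [buildF, dif_neg (mem_sdiff.mp hj).2, dif_pos hj, dif_pos hk] at hv
    have := (σ ⟨k, hk⟩).2; omega
  · simp only [buildF, dif_neg (mem_sdiff.mp hj).2, dif_pos hj,
      dif_neg (mem_sdiff.mp hk).2, dif_pos hk] at hv
    have : τ ⟨j, hj⟩ = τ ⟨k, hk⟩ := Fin.ext (by omega)
    have := τ.injective this
    exact Subtype.ext (congrArg (Subtype.val ∘ Subtype.val) this)
  · have hkA : ¬ k.1 ∈ A := by rw [hk]; exact (basic_facts hi hA).2.1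
    have hkB : ¬ k.1 ∈ S.erase i \ A := by rw [hk]; simp
    simp only [buildF, dif_neg (mem_sdiff.mp hj).2, dif_pos hj, dif_neg hkA, dif_neg hkB] at hv
    omega
  · have hjA : ¬ j.1 ∈ A := by rw [hj]; exact (basic_facts hi hA).2.1
    have hjB : ¬ j.1 ∈ S.erase i \ A := by rw [hj]; simp
    simp only [buildF, dif_neg hjA, dif_neg hjB, dif_pos hk] at hv
    have := (σ ⟨k, hk⟩).2; omega
  · have hjA : ¬ j.1 ∈ A := by rw [hj]; exact (basic_facts hi hA).2.1
    have hjB : ¬ j.1 ∈ S.erase i \ A := by rw [hj]; simp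
    simp only [buildF, dif_neg hjA, dif_neg hjB, dif_neg (mem_sdiff.mp hk).2, dif_pos hk] at hv
    omega
  · exact Subtype.ext (hj.trans hk.symm)

lemma buildF_bij (hi : i ∈ S) (hA : A ⊆ S.erase i) (σ τ) : Function.Bijective (buildF hi hA σ τ) := by
  rw [Fintype.bijective_iff_injective_and_card]
  exact ⟨buildF_inj hi hA σ τ, by simp [Fintype.card_coe]⟩
end fiber

section fiber2
variable {S : Finset N} {i : N} {A : Finset N}

noncomputable def buildPi (hi : i ∈ S) (hA : A ⊆ S.erase i)
    (σ : {j : {x // x ∈ S} // j.1 ∈ A} ≃ Fin A.card)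
    (τ : {j : {x // x ∈ S} // j.1 ∈ S.erase i \ A} ≃ Fin (S.card - 1 - A.card)) :
    {x // x ∈ S} ≃ Fin S.card :=
  Equiv.ofBijective _ (buildF_bij hi hA σ τ)

lemma buildPi_apply (hi : i ∈ S) (hA : A ⊆ S.erase i) (σ τ) (j : {x // x ∈ S}) :
    buildPi hi hA σ τ j = buildF hi hA σ τ j := rfl

lemma buildPi_mem_fiber (hi : i ∈ S) (hA : A ⊆ S.erase i) (σ τ) :
    ∀ j : {x // x ∈ S}, (buildPi hi hA σ τ j < buildPi hi hA σ τ ⟨i, hi⟩ ↔ j.1 ∈ A) := by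
  intro j
  obtain ⟨hAS, hiA, ha, hs⟩ := basic_facts hi hA
  have hiB : ¬ (i ∈ S.erase i \ A) := by simp
  have hFi : (buildPi hi hA σ τ ⟨i, hi⟩ : ℕ) = A.card := by
    rw [buildPi_apply]; simp only [buildF, dif_neg hiA, dif_neg hiB]
  rw [Fin.lt_iff_val_lt_val, hFi, buildPi_apply]
  rcases trichotomy hi hA j with hj | hj | hj
  · simp only [buildF, dif_pos hj]
    exact ⟨fun _ => hj, fun _ => (σ ⟨j, hj⟩).2⟩
  · simp only [buildF, dif_neg (mem_sdiff.mp hj).2, dif_pos hj]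
    constructor
    · intro h; omega
    · intro h; exact absurd h (mem_sdiff.mp hj).2
  · have hjA : ¬ j.1 ∈ A := by rw [hj]; exact hiA
    have hjB : ¬ j.1 ∈ S.erase i \ A := by rw [hj]; simp
    simp only [buildF, dif_neg hjA, dif_neg hjB]
    constructor
    · intro h; omega
    · intro h; exact absurd h hjA

lemma fiber_card (hi : i ∈ S) (hA : A ⊆ S.erase i) :
    Fintype.card {π : {x // x ∈ S} ≃ Fin S.card //
        ∀ j : {x // x ∈ S}, (π j < π ⟨i, hi⟩ ↔ j.1 ∈ A)}
      = A.card.factorial * (S.card - 1 - A.card).factorial := by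
  obtain ⟨hAS, hiA, ha, hs⟩ := basic_facts hi hA
  have hT1 : Fintype.card {j : {x // x ∈ S} // j.1 ∈ A} = A.card := card_subtype_mem S A hAS
  have hT2 : Fintype.card {j : {x // x ∈ S} // j.1 ∈ S.erase i \ A} = S.card - 1 - A.card := by
    rw [card_subtype_mem S _ ((sdiff_subset).trans (erase_subset _ _)),
      card_sdiff_of_subset hA, card_erase_of_mem hi]
  -- the bijection G from pairs to the fiber
  set G : ({j : {x // x ∈ S} // j.1 ∈ A} ≃ Fin A.card) ×
      ({j : {x // x ∈ S} // j.1 ∈ S.erase i \ A} ≃ Fin (S.card - 1 - A.card)) →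
      {π : {x // x ∈ S} ≃ Fin S.card // ∀ j : {x // x ∈ S}, (π j < π ⟨i, hi⟩ ↔ j.1 ∈ A)} :=
    fun p => ⟨buildPi hi hA p.1 p.2, buildPi_mem_fiber hi hA p.1 p.2⟩ with hG
  have hGinj : Function.Injective G := by
    intro p q h
    have hfun : ∀ j, buildF hi hA p.1 p.2 j = buildF hi hA q.1 q.2 j := by
      intro j
      have := congrArg (fun x => x.1 j) h
      simpa [hG, buildPi_apply] using this
    have h1 : p.1 = q.1 := by
      apply Equiv.ext; rintro ⟨j, hj⟩
      have := hfun j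
      simp only [buildF, dif_pos hj] at this
      exact Fin.ext (by simpa [Fin.ext_iff] using this)
    have h2 : p.2 = q.2 := by
      apply Equiv.ext; rintro ⟨j, hj⟩
      have := hfun j
      simp only [buildF, dif_neg (mem_sdiff.mp hj).2, dif_pos hj, Fin.ext_iff] at this
      exact Fin.ext (by omega)
    exact Prod.ext h1 h2
  have hGsurj : Function.Surjective G := by
    rintro ⟨π, hπ⟩
    have hpi : (π ⟨i, hi⟩ : ℕ) = A.card := pos_eq hi hA π hπ
    -- below-i positions
    have hσlt : ∀ j : {j : {x // x ∈ S} // j.1 ∈ A}, (π j.1 : ℕ) < A.card := by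
      intro j
      have := (hπ j.1).2 j.2
      rw [Fin.lt_iff_val_lt_val, hpi] at this; exact this
    have hτlt : ∀ j : {j : {x // x ∈ S} // j.1 ∈ S.erase i \ A},
        A.card + 1 ≤ (π j.1 : ℕ) := by
      intro j
      have h1 : ¬ (π j.1 < π ⟨i, hi⟩) := fun h => (mem_sdiff.mp j.2).2 ((hπ j.1).1 h)
      have h2 : π j.1 ≠ π ⟨i, hi⟩ := by
        intro h
        have := π.injective h
        exact (mem_erase.mp (mem_sdiff.mp j.2).1).1 (by simpa [Subtype.ext_iff] using this)
      rw [Fin.lt_iff_val_lt_val, hpi] at h1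
      have h3 : (π j.1 : ℕ) ≠ A.card := by rw [← hpi]; exact fun h => h2 (Fin.ext h)
      omega
    obtain ⟨hAS, hiA, ha, hs⟩ := basic_facts hi hA
    set σ0 : {j : {x // x ∈ S} // j.1 ∈ A} → Fin A.card :=
      fun j => ⟨π j.1, hσlt j⟩ with hσ0
    have hσ0inj : Function.Injective σ0 := by
      intro u v h
      exact Subtype.ext (π.injective (Fin.ext (by simpa [hσ0, Fin.ext_iff] using h)))
    have hσ0bij : Function.Bijective σ0 :=
      (Fintype.bijective_iff_injective_and_card σ0).mpr ⟨hσ0inj, by rw [hT1, Fintype.card_fin]⟩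
    set τ0 : {j : {x // x ∈ S} // j.1 ∈ S.erase i \ A} → Fin (S.card - 1 - A.card) :=
      fun j => ⟨(π j.1 : ℕ) - (A.card + 1), by have := (π j.1).2; have := hτlt j; omega⟩ with hτ0
    have hτ0inj : Function.Injective τ0 := by
      intro u v h
      have hu := hτlt u; have hv := hτlt v
      simp only [hτ0, Fin.ext_iff] at h
      exact Subtype.ext (π.injective (Fin.ext (by omega)))
    have hτ0bij : Function.Bijective τ0 :=
      (Fintype.bijective_iff_injective_and_card τ0).mpr ⟨hτ0inj, by rw [hT2, Fintype.card_fin]⟩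
    refine ⟨⟨Equiv.ofBijective σ0 hσ0bij, Equiv.ofBijective τ0 hτ0bij⟩, ?_⟩
    apply Subtype.ext
    apply Equiv.ext
    intro j
    simp only [hG, buildPi_apply]
    rcases trichotomy hi hA j with hj | hj | hj
    · simp only [buildF, dif_pos hj]
      exact Fin.ext (by simp [Equiv.ofBijective_apply, hσ0])
    · simp only [buildF, dif_neg (mem_sdiff.mp hj).2, dif_pos hj]
      refine Fin.ext ?_
      have h := hτlt ⟨j, hj⟩
      change A.card + 1 ≤ (π j : ℕ) at h
      simp only [Equiv.ofBijective_apply, hτ0]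
      show A.card + 1 + ((π j : ℕ) - (A.card + 1)) = (π j : ℕ)
      omega
    · have hjA : ¬ j.1 ∈ A := by rw [hj]; exact hiA
      have hjB : ¬ j.1 ∈ S.erase i \ A := by rw [hj]; simp
      simp only [buildF, dif_neg hjA, dif_neg hjB]
      have : j = ⟨i, hi⟩ := Subtype.ext hj
      rw [this]
      exact Fin.ext (by rw [hpi])
  have := Fintype.card_of_bijective ⟨hGinj, hGsurj⟩
  rw [← this, Fintype.card_prod,
    Fintype.card_equiv (Fintype.equivFinOfCardEq hT1),
    Fintype.card_equiv (Fintype.equivFinOfCardEq hT2), hT1, hT2]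
end fiber2

lemma mem_preSet {S : Finset N} (π : {x // x ∈ S} ≃ Fin S.card) (i : {x // x ∈ S}) (x : N) :
    x ∈ preSet S π i ↔ ∃ hx : x ∈ S, π ⟨x, hx⟩ < π i := by
  simp only [preSet, Finset.mem_image, Finset.mem_filter, Finset.mem_attach, true_and]
  constructor
  · rintro ⟨j, hj, rfl⟩; exact ⟨j.2, hj⟩
  · rintro ⟨hx, h⟩; exact ⟨⟨x, hx⟩, h, rfl⟩

lemma preSet_eq_iff {S : Finset N} (π : {x // x ∈ S} ≃ Fin S.card) {i : N} (hi : i ∈ S)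
    {A : Finset N} (hA : A ⊆ S) :
    preSet S π ⟨i, hi⟩ = A ↔ ∀ j : {x // x ∈ S}, (π j < π ⟨i, hi⟩ ↔ j.1 ∈ A) := by
  constructor
  · rintro rfl j
    rw [mem_preSet]
    constructor
    · intro h; exact ⟨j.2, by simpa using h⟩
    · rintro ⟨hx, h⟩; simpa using h
  · intro h
    ext x
    rw [mem_preSet]
    constructor
    · rintro ⟨hx, hlt⟩; exact (h ⟨x, hx⟩).1 hlt
    · intro hx; exact ⟨hA hx, (h ⟨x, hA hx⟩).2 hx⟩

lemma preSet_subset {S : Finset N} (π : {x // x ∈ S} ≃ Fin S.card) {i : N} (hi : i ∈ S) :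
    preSet S π ⟨i, hi⟩ ⊆ S.erase i := by
  intro x hx
  rw [mem_preSet] at hx
  obtain ⟨hxS, hlt⟩ := hx
  refine mem_erase.mpr ⟨?_, hxS⟩
  rintro rfl
  exact absurd hlt (lt_irrefl _)

lemma sum_perm (g : Finset N → ℝ) {S : Finset N} {i : N} (hi : i ∈ S) :
    ∑ π : {x // x ∈ S} ≃ Fin S.card, g (preSet S π ⟨i, hi⟩)
      = ∑ A ∈ (S.erase i).powerset,
          (A.card.factorial * (S.card - 1 - A.card).factorial : ℝ) * g A := by
  rw [← Finset.sum_fiberwise_of_maps_to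
    (g := fun π : {x // x ∈ S} ≃ Fin S.card => preSet S π ⟨i, hi⟩)
    (fun π _ => Finset.mem_powerset.mpr (preSet_subset π hi))]
  refine Finset.sum_congr rfl ?_
  intro A hA
  rw [Finset.mem_powerset] at hA
  have hAS : A ⊆ S := hA.trans (erase_subset _ _)
  calc ∑ π ∈ Finset.univ.filter
        (fun π : {x // x ∈ S} ≃ Fin S.card => preSet S π ⟨i, hi⟩ = A), g (preSet S π ⟨i, hi⟩)
      = ∑ π ∈ Finset.univ.filter
        (fun π : {x // x ∈ S} ≃ Fin S.card => preSet S π ⟨i, hi⟩ = A), g A := by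
        refine Finset.sum_congr rfl ?_
        intro π hπ
        rw [(Finset.mem_filter.mp hπ).2]
    _ = ((Finset.univ.filter
        (fun π : {x // x ∈ S} ≃ Fin S.card => preSet S π ⟨i, hi⟩ = A)).card : ℝ) * g A := by
        rw [Finset.sum_const, nsmul_eq_mul]
    _ = (A.card.factorial * (S.card - 1 - A.card).factorial : ℝ) * g A := by
        congr 1
        have : (Finset.univ.filter
            (fun π : {x // x ∈ S} ≃ Fin S.card => preSet S π ⟨i, hi⟩ = A)).card
            = Fintype.card {π : {x // x ∈ S} ≃ Fin S.card // preSet S π ⟨i, hi⟩ = A} :=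
          (Fintype.card_subtype _).symm
        rw [this, Fintype.card_congr (Equiv.subtypeEquivRight
          (fun π => preSet_eq_iff π hi hAS)), fiber_card hi hA]
        push_cast
        ring

end Aux

section Layer2
variable {N : Type*} [DecidableEq N]

/-- the Shapley/potential coefficient -/
noncomputable def coeff (s t : ℕ) : ℝ :=
  (Nat.factorial (s - t) : ℝ) * (Nat.factorial (t - 1) : ℝ) / (Nat.factorial s : ℝ)

lemma coeff_nonneg (s t : ℕ) : 0 ≤ coeff s t := by
  unfold coeff; positivity

/-- The per-resource potential. -/
noncomputable def Phi (C : Finset N → ℝ) (S : Finset N) : ℝ :=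
  ∑ T ∈ S.powerset.filter (fun T => T.Nonempty), coeff S.card T.card * C T

lemma pot_eq {n : ℕ} {R : Type*} [Fintype R] [DecidableEq R]
    (Cr : R → Finset (Fin n) → ℝ) (P : Fin n → Finset R) :
    pot Cr P = ∑ r : R, Phi (Cr r) (users P r) := by
  rfl

lemma shapley_eq (C : Finset N → ℝ) {S : Finset N} {i : N} (hi : i ∈ S) :
    shapley C S i = ∑ A ∈ (S.erase i).powerset,
      ((A.card.factorial : ℝ) * ((S.card - 1 - A.card).factorial : ℝ) /
        (S.card.factorial : ℝ)) * (C (insert i A) - C A) := by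
  rw [shapley, dif_pos hi]
  rw [sum_perm (fun A => C (A ∪ {i}) - C A) hi, Finset.mul_sum]
  refine Finset.sum_congr rfl ?_
  intro A hA
  have : A ∪ {i} = insert i A := by rw [Finset.union_comm, ← Finset.insert_eq]
  rw [this]
  push_cast
  ring

lemma Phi_full (C : Finset N → ℝ) (hC0 : C ∅ = 0) (S : Finset N) :
    Phi C S = ∑ T ∈ S.powerset, coeff S.card T.card * C T := by
  rw [Phi, Finset.sum_filter]
  refine Finset.sum_congr rfl ?_
  intro T _
  by_cases h : T.Nonempty
  · rw [if_pos h]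
  · rw [not_nonempty_iff_eq_empty] at h
    subst h
    rw [if_neg (by simp), hC0, mul_zero]

lemma coeff_id {s t : ℕ} (ht : 1 ≤ t) (hts : t ≤ s - 1) (hs : 1 ≤ s) :
    coeff s t + (t.factorial : ℝ) * ((s - 1 - t).factorial : ℝ) / (s.factorial : ℝ)
      = coeff (s - 1) t := by
  obtain ⟨k, rfl⟩ : ∃ k, t = k + 1 := ⟨t - 1, by omega⟩
  obtain ⟨d, rfl⟩ : ∃ d, s = k + d + 2 := ⟨s - k - 2, by omega⟩
  have e1 : k + d + 2 - (k + 1) = d + 1 := by omega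
  have e2 : k + 1 - 1 = k := by omega
  have e3 : k + d + 2 - 1 - (k + 1) = d := by omega
  have e4 : k + d + 2 - 1 = k + d + 1 := by omega
  rw [coeff, coeff, e1, e2, e3, e4]
  rw [Nat.factorial_succ d, Nat.factorial_succ k]
  have e5 : (k + d + 2) = (k + d + 1) + 1 := by omega
  rw [e5, Nat.factorial_succ (k + d + 1)]
  have h1 : ((k + d + 1).factorial : ℝ) ≠ 0 := Nat.cast_ne_zero.mpr (Nat.factorial_ne_zero _)
  push_cast
  field_simp
  ring

end Layer2

section Layer3
variable {N : Type*} [DecidableEq N]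

lemma Phi_diff (C : Finset N → ℝ) (hC0 : C ∅ = 0) {S : Finset N} {i : N} (hi : i ∈ S) :
    Phi C S - Phi C (S.erase i) = shapley C S i := by
  have hs : 1 ≤ S.card := one_le_card.mpr ⟨i, hi⟩
  have hni : i ∉ S.erase i := notMem_erase _ _
  have hce : (S.erase i).card = S.card - 1 := card_erase_of_mem hi
  have hsplit := Finset.sum_powerset_insert hni (f := fun T => coeff S.card T.card * C T)
  rw [insert_erase hi] at hsplit
  rw [Phi_full C hC0 S, Phi_full C hC0 (S.erase i), shapley_eq C hi, hsplit]
  have lhs_eq : (∑ T ∈ (S.erase i).powerset, coeff S.card T.card * C T)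
      + (∑ T ∈ (S.erase i).powerset, coeff S.card (insert i T).card * C (insert i T))
      - (∑ T ∈ (S.erase i).powerset, coeff (S.erase i).card T.card * C T)
      = ∑ T ∈ (S.erase i).powerset,
          (coeff S.card T.card * C T + coeff S.card (insert i T).card * C (insert i T)
            - coeff (S.erase i).card T.card * C T) := by
    rw [← Finset.sum_add_distrib, ← Finset.sum_sub_distrib]
  rw [lhs_eq]
  refine Finset.sum_congr rfl ?_
  intro T hT
  rw [Finset.mem_powerset] at hT
  have hiT : i ∉ T := fun h => hni (hT h)
  have hcins : (insert i T).card = T.card + 1 := card_insert_of_notMem hiT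
  have hcoeff2 : coeff S.card (T.card + 1)
      = (T.card.factorial : ℝ) * ((S.card - 1 - T.card).factorial : ℝ)
          / (S.card.factorial : ℝ) := by
    unfold coeff
    have e1 : S.card - (T.card + 1) = S.card - 1 - T.card := by omega
    have e2 : T.card + 1 - 1 = T.card := by omega
    rw [e1, e2]
    ring
  by_cases h0 : T = ∅
  · subst h0
    rw [hcins, hcoeff2]
    simp [hC0, coeff]
  · have ht1 : 1 ≤ T.card := one_le_card.mpr (nonempty_iff_ne_empty.mpr h0)
    have hts : T.card ≤ S.card - 1 := by
      rw [← hce]; exact card_le_card hT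
    have hid := coeff_id (s := S.card) ht1 hts hs
    rw [hcins, hcoeff2, hce, ← hid]
    ring

/-- the first k elements of the ordering π -/
def Pk (S : Finset N) (π : {x // x ∈ S} ≃ Fin S.card) (k : ℕ) : Finset N :=
  (S.attach.filter (fun j => (π j : ℕ) < k)).image Subtype.val

lemma mem_Pk {S : Finset N} (π : {x // x ∈ S} ≃ Fin S.card) (k : ℕ) (x : N) :
    x ∈ Pk S π k ↔ ∃ hx : x ∈ S, (π ⟨x, hx⟩ : ℕ) < k := by
  simp only [Pk, Finset.mem_image, Finset.mem_filter, Finset.mem_attach, true_and]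
  constructor
  · rintro ⟨j, hj, rfl⟩; exact ⟨j.2, hj⟩
  · rintro ⟨hx, h⟩; exact ⟨⟨x, hx⟩, h, rfl⟩

lemma Pk_zero {S : Finset N} (π : {x // x ∈ S} ≃ Fin S.card) : Pk S π 0 = ∅ := by
  ext x; rw [mem_Pk]; simp

lemma Pk_card {S : Finset N} (π : {x // x ∈ S} ≃ Fin S.card) : Pk S π S.card = S := by
  ext x
  rw [mem_Pk]
  constructor
  · rintro ⟨hx, _⟩; exact hx
  · intro hx; exact ⟨hx, (π ⟨x, hx⟩).2⟩

lemma preSet_eq_Pk {S : Finset N} (π : {x // x ∈ S} ≃ Fin S.card) (i : {x // x ∈ S}) :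
    preSet S π i = Pk S π (π i) := by
  ext x
  rw [mem_preSet, mem_Pk]
  constructor
  · rintro ⟨hx, h⟩; exact ⟨hx, h⟩
  · rintro ⟨hx, h⟩; exact ⟨hx, h⟩

lemma preSet_union_eq_Pk {S : Finset N} (π : {x // x ∈ S} ≃ Fin S.card) (i : {x // x ∈ S}) :
    preSet S π i ∪ {i.1} = Pk S π ((π i : ℕ) + 1) := by
  ext x
  rw [Finset.mem_union, Finset.mem_singleton, mem_preSet, mem_Pk]
  constructor
  · rintro (⟨hx, h⟩ | rfl)
    · exact ⟨hx, by omega⟩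
    · exact ⟨i.2, by simp⟩
  · rintro ⟨hx, h⟩
    rcases Nat.lt_succ_iff_lt_or_eq.mp h with h' | h'
    · exact Or.inl ⟨hx, h'⟩
    · right
      have : π ⟨x, hx⟩ = π i := Fin.ext h'
      have := π.injective this
      exact congrArg Subtype.val this

lemma shapley_total (C : Finset N → ℝ) (hC0 : C ∅ = 0) (S : Finset N) :
    ∑ i ∈ S, shapley C S i = C S := by
  classical
  have hceq : Fintype.card {x // x ∈ S} = S.card := Fintype.card_coe S
  have h1 : ∑ i ∈ S, shapley C S i
      = ∑ i ∈ S.attach, (1 / (Nat.factorial S.card : ℝ)) *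
          ∑ π : {x // x ∈ S} ≃ Fin S.card,
            (C (preSet S π i ∪ {i.1}) - C (preSet S π i)) := by
    rw [← Finset.sum_attach S (fun i => shapley C S i)]
    refine Finset.sum_congr rfl ?_
    intro i _
    rw [shapley, dif_pos i.2]
  rw [h1, ← Finset.mul_sum, Finset.sum_comm]
  have h2 : ∀ π : {x // x ∈ S} ≃ Fin S.card,
      ∑ i ∈ S.attach, (C (preSet S π i ∪ {i.1}) - C (preSet S π i)) = C S := by
    intro π
    have h3 : ∑ i ∈ S.attach, (C (preSet S π i ∪ {i.1}) - C (preSet S π i))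
        = ∑ i : {x // x ∈ S}, (C (Pk S π ((π i : ℕ) + 1)) - C (Pk S π (π i))) := by
      rw [Finset.univ_eq_attach]
      refine Finset.sum_congr rfl ?_
      intro i _
      rw [preSet_union_eq_Pk, preSet_eq_Pk]
    rw [h3]
    refine Eq.trans (Equiv.sum_comp π
      (fun k : Fin S.card => (C (Pk S π ((k : ℕ) + 1)) - C (Pk S π (k : ℕ))))) ?_
    refine Eq.trans (Fin.sum_univ_eq_sum_range
      (fun m : ℕ => (C (Pk S π (m + 1)) - C (Pk S π m))) S.card) ?_
    rw [Finset.sum_range_sub (fun k => C (Pk S π k)) S.card, Pk_card, Pk_zero, hC0, sub_zero]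
  rw [Finset.sum_congr rfl (fun π _ => h2 π), Finset.sum_const, nsmul_eq_mul,
    Finset.card_univ, Fintype.card_equiv (Fintype.equivFinOfCardEq hceq), hceq]
  have hne : ((S.card.factorial : ℝ)) ≠ 0 := Nat.cast_ne_zero.mpr (Nat.factorial_ne_zero _)
  field_simp

end Layer3

section Layer4
variable {N : Type*} [DecidableEq N]

lemma marginal_sum (C : Finset N → ℝ) (hnn : 0 ≤ C ∅)
    (hsub : ∀ (X Y : Finset N) (i : N), X ⊆ Y → i ∉ Y →
      C (insert i Y) - C Y ≤ C (insert i X) - C X)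
    (S : Finset N) : ∑ i ∈ S, (C S - C (S.erase i)) ≤ C S := by
  classical
  induction S using Finset.induction_on with
  | empty => simpa using hnn
  | @insert j S' hj ih =>
    rw [Finset.sum_insert hj]
    have hje : (insert j S').erase j = S' := erase_insert hj
    have hstep : ∀ x ∈ S', C (insert j S') - C ((insert j S').erase x)
        ≤ C S' - C (S'.erase x) := by
      intro x hx
      have hxj : x ≠ j := fun h => hj (h ▸ hx)
      have h1 : insert x ((insert j S').erase x) = insert j S' :=
        insert_erase (mem_insert_of_mem hx)
      have h2 : insert x (S'.erase x) = S' := insert_erase hx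
      have h3 : S'.erase x ⊆ (insert j S').erase x :=
        erase_subset_erase x (subset_insert j S')
      have := hsub (S'.erase x) ((insert j S').erase x) x h3 (notMem_erase _ _)
      rw [h1, h2] at this
      exact this
    have h4 : ∑ x ∈ S', (C (insert j S') - C ((insert j S').erase x))
        ≤ ∑ x ∈ S', (C S' - C (S'.erase x)) := Finset.sum_le_sum hstep
    rw [hje]
    linarith [ih]

lemma Phi_empty (C : Finset N → ℝ) : Phi C ∅ = 0 := by
  unfold Phi
  rw [Finset.powerset_empty]
  simp [Finset.filter_singleton, Finset.not_nonempty_empty]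

lemma le_Phi (C : Finset N → ℝ) (hC0 : C ∅ = 0) (hnn : ∀ T, 0 ≤ C T)
    (hsub : ∀ (X Y : Finset N) (i : N), X ⊆ Y → i ∉ Y →
      C (insert i Y) - C Y ≤ C (insert i X) - C X) :
    ∀ S : Finset N, C S ≤ Phi C S := by
  classical
  intro S
  induction S using Finset.strongInduction with
  | _ S ih =>
    by_cases hS : S = ∅
    · subst hS; rw [Phi_empty, hC0]
    · have hcard : 1 ≤ S.card := one_le_card.mpr (nonempty_iff_ne_empty.mpr hS)
      have key : (S.card : ℝ) * Phi C S = C S + ∑ i ∈ S, Phi C (S.erase i) := by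
        have h1 : ∑ i ∈ S, (Phi C S - Phi C (S.erase i)) = ∑ i ∈ S, shapley C S i :=
          Finset.sum_congr rfl (fun i hi => Phi_diff C hC0 hi)
        rw [shapley_total C hC0 S] at h1
        rw [Finset.sum_sub_distrib, Finset.sum_const, nsmul_eq_mul] at h1
        linarith
      have hih : ∀ i ∈ S, C (S.erase i) ≤ Phi C (S.erase i) :=
        fun i hi => ih _ (erase_ssubset hi)
      have h3 : ∑ i ∈ S, C (S.erase i) ≤ ∑ i ∈ S, Phi C (S.erase i) :=
        Finset.sum_le_sum hih
      have hmar := marginal_sum C hC0.symm.le hsub S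
      rw [Finset.sum_sub_distrib, Finset.sum_const, nsmul_eq_mul] at hmar
      have hpos : (0 : ℝ) < S.card := by exact_mod_cast hcard
      have h4 : (S.card : ℝ) * C S ≤ (S.card : ℝ) * Phi C S := by linarith
      exact le_of_mul_le_mul_left h4 hpos

lemma choose_coeff {s k : ℕ} (h1 : 1 ≤ k) (h2 : k ≤ s) :
    (s.choose k : ℝ) * coeff s k = 1 / k := by
  have hnat : s.choose k * k.factorial * (s - k).factorial = s.factorial :=
    Nat.choose_mul_factorial_mul_factorial h2
  have hk : k * (k - 1).factorial = k.factorial := Nat.mul_factorial_pred (by omega)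
  have hsf : ((s.factorial : ℝ)) ≠ 0 := Nat.cast_ne_zero.mpr (Nat.factorial_ne_zero _)
  have hkk : (k : ℝ) ≠ 0 := Nat.cast_ne_zero.mpr (by omega)
  have c1 : (s.choose k : ℝ) * (k.factorial : ℝ) * ((s - k).factorial : ℝ)
      = (s.factorial : ℝ) := by exact_mod_cast congrArg (Nat.cast (R := ℝ)) hnat
  have c2 : (k : ℝ) * ((k - 1).factorial : ℝ) = (k.factorial : ℝ) := by
    exact_mod_cast congrArg (Nat.cast (R := ℝ)) hk
  unfold coeff
  rw [← mul_div_assoc, div_eq_div_iff hsf (by exact_mod_cast hkk), one_mul]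
  linear_combination ((s.choose k : ℝ) * ((s - k).factorial : ℝ)) * c2 + c1

lemma coeff_total (S : Finset N) :
    ∑ T ∈ S.powerset.filter (fun T => T.Nonempty), coeff S.card T.card
      = harmonicNum S.card := by
  classical
  have hmap : ∀ T ∈ S.powerset.filter (fun T => T.Nonempty),
      T.card ∈ Finset.Icc 1 S.card := by
    intro T hT
    rw [Finset.mem_filter, Finset.mem_powerset] at hT
    rw [Finset.mem_Icc]
    exact ⟨one_le_card.mpr hT.2, card_le_card hT.1⟩
  rw [← Finset.sum_fiberwise_of_maps_to hmap (fun T => coeff S.card T.card)]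
  unfold harmonicNum
  refine Finset.sum_congr rfl ?_
  intro k hk
  rw [Finset.mem_Icc] at hk
  have hfib : (S.powerset.filter (fun T => T.Nonempty)).filter (fun T => T.card = k)
      = S.powersetCard k := by
    ext T
    rw [Finset.mem_filter, Finset.mem_filter, Finset.mem_powerset, Finset.mem_powersetCard]
    constructor
    · rintro ⟨⟨h1, _⟩, h2⟩; exact ⟨h1, h2⟩
    · rintro ⟨h1, h2⟩
      exact ⟨⟨h1, one_le_card.mp (h2 ▸ hk.1)⟩, h2⟩
  rw [hfib]
  have : ∀ T ∈ S.powersetCard k, coeff S.card T.card = coeff S.card k := by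
    intro T hT
    rw [(Finset.mem_powersetCard.mp hT).2]
  rw [Finset.sum_congr rfl this, Finset.sum_const, nsmul_eq_mul, Finset.card_powersetCard]
  exact choose_coeff hk.1 hk.2

lemma Phi_le (C : Finset N → ℝ) (hmono : ∀ T U : Finset N, T ⊆ U → C T ≤ C U)
    (S : Finset N) : Phi C S ≤ harmonicNum S.card * C S := by
  calc Phi C S ≤ ∑ T ∈ S.powerset.filter (fun T => T.Nonempty), coeff S.card T.card * C S := by
        refine Finset.sum_le_sum ?_
        intro T hT
        rw [Finset.mem_filter, Finset.mem_powerset] at hT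
        exact mul_le_mul_of_nonneg_left (hmono T S hT.1) (coeff_nonneg _ _)
    _ = harmonicNum S.card * C S := by rw [← Finset.sum_mul, coeff_total]

lemma harmonicNum_nonneg (k : ℕ) : 0 ≤ harmonicNum k := by
  unfold harmonicNum
  positivity

lemma harmonicNum_mono {a b : ℕ} (h : a ≤ b) : harmonicNum a ≤ harmonicNum b := by
  unfold harmonicNum
  refine Finset.sum_le_sum_of_subset_of_nonneg (Finset.Icc_subset_Icc_right h) ?_
  intro l _ _
  positivity
end Layer4

section Game
variable {n : ℕ} {R : Type*} [DecidableEq R]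

lemma mem_users {P : Fin n → Finset R} {r : R} {j : Fin n} :
    j ∈ users P r ↔ r ∈ P j := by simp [users]

lemma users_update_of_iff {P : Fin n → Finset R} {i : Fin n} {Q : Finset R} {r : R}
    (h : r ∈ Q ↔ r ∈ P i) : users (Function.update P i Q) r = users P r := by
  ext j
  rw [mem_users, mem_users, Function.update_apply]
  rcases eq_or_ne j i with rfl | hji
  · rw [if_pos rfl]; exact h
  · rw [if_neg hji]

lemma users_update_erase {P : Fin n → Finset R} {i : Fin n} {Q : Finset R} {r : R}
    (h1 : r ∈ P i) (h2 : r ∉ Q) :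
    users (Function.update P i Q) r = (users P r).erase i := by
  ext j
  rw [mem_users, Finset.mem_erase, mem_users, Function.update_apply]
  rcases eq_or_ne j i with rfl | hji
  · rw [if_pos rfl]
    exact ⟨fun h => absurd h h2, fun h => absurd rfl h.1⟩
  · rw [if_neg hji]
    exact ⟨fun h => ⟨hji, h⟩, fun h => h.2⟩

lemma users_update_insert {P : Fin n → Finset R} {i : Fin n} {Q : Finset R} {r : R}
    (h1 : r ∉ P i) (h2 : r ∈ Q) :
    users (Function.update P i Q) r = insert i (users P r) := by
  ext j
  rw [mem_users, Finset.mem_insert, mem_users, Function.update_apply]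
  rcases eq_or_ne j i with rfl | hji
  · rw [if_pos rfl]
    exact ⟨fun _ => Or.inl rfl, fun _ => h2⟩
  · rw [if_neg hji]
    exact ⟨fun h => Or.inr h, fun h => h.resolve_left hji⟩

lemma privCost_eq [Fintype R] (Cr : R → Finset (Fin n) → ℝ) (P : Fin n → Finset R) (i : Fin n) :
    privCost Cr P i = ∑ r : R, (if r ∈ P i then shapley (Cr r) (users P r) i else 0) := by
  have huniv : Finset.univ.filter (fun r : R => r ∈ P i) = P i := by
    ext r; simp
  rw [privCost]
  conv_lhs => rw [← huniv]
  rw [Finset.sum_filter]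

lemma pot_exact [Fintype R] (Cr : R → Finset (Fin n) → ℝ) (hC0 : ∀ r, Cr r ∅ = 0)
    (P : Fin n → Finset R) (i : Fin n) (Q : Finset R) :
    pot Cr P - pot Cr (Function.update P i Q)
      = privCost Cr P i - privCost Cr (Function.update P i Q) i := by
  rw [pot_eq, pot_eq, privCost_eq, privCost_eq, ← Finset.sum_sub_distrib,
    ← Finset.sum_sub_distrib]
  refine Finset.sum_congr rfl ?_
  intro r _
  have hupdi : (Function.update P i Q) i = Q := Function.update_self i Q P
  by_cases h1 : r ∈ P i <;> by_cases h2 : r ∈ Q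
  · rw [users_update_of_iff (iff_of_true h2 h1), hupdi, if_pos h1, if_pos h2]
    simp
  · rw [users_update_erase h1 h2, hupdi, if_pos h1, if_neg h2, sub_zero]
    exact Phi_diff (Cr r) (hC0 r) (mem_users.mpr h1)
  · rw [users_update_insert h1 h2, hupdi, if_neg h1, if_pos h2, zero_sub]
    have hiu : i ∉ users P r := fun h => h1 (mem_users.mp h)
    have h3 : (insert i (users P r)).erase i = users P r := erase_insert hiu
    have hd := Phi_diff (Cr r) (hC0 r) (S := insert i (users P r)) (i := i)
      (mem_insert_self i _)
    rw [h3] at hd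
    linarith
  · rw [users_update_of_iff (iff_of_false h2 h1), hupdi, if_neg h1, if_neg h2]
    simp
end Game

/-- The price of stability of Shapley cost sharing games with submodular costs
is at most `H_n`. -/
theorem pos_shapley_submodular {n : ℕ} {R : Type*} [Fintype R] [DecidableEq R]
    (Strat : Fin n → Set (Finset R)) (Cr : R → Finset (Fin n) → ℝ)
    (hC0 : ∀ r, Cr r ∅ = 0)
    (hnn : ∀ r T, 0 ≤ Cr r T)
    (hmono : ∀ r (T U : Finset (Fin n)), T ⊆ U → Cr r T ≤ Cr r U)
    (hsub : ∀ r (X Y : Finset (Fin n)) (i : Fin n), X ⊆ Y → i ∉ Y →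
      Cr r (insert i Y) - Cr r Y ≤ Cr r (insert i X) - Cr r X)
    (hStrat : ∀ i, (Strat i).Nonempty) :
    ∃ P : Fin n → Finset R, isPNE Strat Cr P ∧
      ∀ Q : Fin n → Finset R, (∀ i, Q i ∈ Strat i) →
        socCost Cr P ≤ harmonicNum n * socCost Cr Q := by
  classical
  set Feas : Finset (Fin n → Finset R) :=
    Finset.univ.filter (fun P => ∀ i, P i ∈ Strat i) with hFeas
  have hmemFeas : ∀ P : Fin n → Finset R, P ∈ Feas ↔ ∀ i, P i ∈ Strat i := by
    intro P
    rw [hFeas, Finset.mem_filter]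
    exact ⟨fun h => h.2, fun h => ⟨Finset.mem_univ _, h⟩⟩
  have hne : Feas.Nonempty := by
    refine ⟨fun i => (hStrat i).choose, ?_⟩
    rw [hmemFeas]
    exact fun i => (hStrat i).choose_spec
  obtain ⟨P, hPmem, hPmin⟩ := Finset.exists_min_image Feas (pot Cr) hne
  have hPfeas : ∀ i, P i ∈ Strat i := (hmemFeas P).mp hPmem
  refine ⟨P, ⟨hPfeas, ?_⟩, ?_⟩
  · intro i Q hQ
    have hup : Function.update P i Q ∈ Feas := by
      rw [hmemFeas]
      intro j
      rcases eq_or_ne j i with rfl | hji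
      · rwa [Function.update_self]
      · rw [Function.update_of_ne hji]; exact hPfeas j
    have hmin := hPmin _ hup
    have hex := pot_exact Cr hC0 P i Q
    linarith
  · intro Q hQfeas
    have hQmem : Q ∈ Feas := (hmemFeas Q).mpr hQfeas
    have h1 : socCost Cr P ≤ pot Cr P := by
      rw [socCost, pot_eq]
      refine Finset.sum_le_sum ?_
      intro r _
      exact le_Phi (Cr r) (hC0 r) (hnn r)
        (fun X Y i hXY hiY => hsub r X Y i hXY hiY) (users P r)
    have h2 : pot Cr P ≤ pot Cr Q := hPmin Q hQmem
    have h3 : pot Cr Q ≤ harmonicNum n * socCost Cr Q := by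
      rw [socCost, pot_eq, Finset.mul_sum]
      refine Finset.sum_le_sum ?_
      intro r _
      calc Phi (Cr r) (users Q r) ≤ harmonicNum (users Q r).card * Cr r (users Q r) :=
            Phi_le (Cr r) (hmono r) (users Q r)
        _ ≤ harmonicNum n * Cr r (users Q r) := by
            refine mul_le_mul_of_nonneg_right (harmonicNum_mono ?_) (hnn r _)
            calc (users Q r).card ≤ (Finset.univ : Finset (Fin n)).card :=
                  Finset.card_le_card (Finset.subset_univ _)
              _ = n := by simp
    linarith
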